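/- For κ > 0 and p ≥ 2, the Bessel ratio satisfies κ A_p'(κ) - A_p(κ) < 0, i.e., κ A_p'(κ) < A_p(κ). -/

import Mathlib

open Real

/-- Modified Bessel function of the first kind, `I_v(κ)`. -/
noncomputable def besselI (v κ : ℝ) : ℝ :=
  ∑' q : ℕ, (1 / (q.factorial * Real.Gamma (q + v + 1))) * (κ / 2) ^ ((2 * q : ℝ) + v)

/-- The Bessel ratio `A_p(κ) = I_{p/2}(κ) / I_{p/2-1}(κ)`. -/
noncomputable def Ap (p : ℕ) (κ : ℝ) : ℝ :=
  besselI (p / 2 : ℝ) κ / besselI ((p / 2 : ℝ) - 1) κ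

namespace Stmt9Aux

open Finset

noncomputable def cc (v : ℝ) (q : ℕ) : ℝ := 1 / (q.factorial * Real.Gamma (q + v + 1))

noncomputable def hh (v t : ℝ) : ℝ := ∑' q : ℕ, cc v q * t ^ q

lemma arg_pos {v : ℝ} (hv : 0 ≤ v) (q : ℕ) : 0 < (q : ℝ) + v + 1 := by positivity

lemma cc_pos {v : ℝ} (hv : 0 ≤ v) (q : ℕ) : 0 < cc v q := by
  unfold cc
  have h1 : (0:ℝ) < q.factorial := by exact_mod_cast q.factorial_pos
  have h2 : 0 < Real.Gamma ((q:ℝ) + v + 1) := Real.Gamma_pos_of_pos (arg_pos hv q)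
  positivity

lemma gamma_ge {v : ℝ} (hv : 0 ≤ v) (q : ℕ) :
    Real.Gamma (v+1) * q.factorial ≤ Real.Gamma ((q:ℝ) + v + 1) := by
  induction q with
  | zero => simp
  | succ n ih =>
    have h := arg_pos hv n
    have he : ((n+1 : ℕ):ℝ) + v + 1 = ((n:ℝ) + v + 1) + 1 := by push_cast; ring
    rw [he, Real.Gamma_add_one h.ne']
    have hΓ : 0 < Real.Gamma (v+1) := Real.Gamma_pos_of_pos (by linarith)
    have hfac : (0:ℝ) < n.factorial := by exact_mod_cast n.factorial_pos
    calc Real.Gamma (v+1) * ((n+1).factorial : ℝ)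
        = ((n:ℝ)+1) * (Real.Gamma (v+1) * n.factorial) := by
          push_cast [Nat.factorial_succ]; ring
      _ ≤ ((n:ℝ)+v+1) * Real.Gamma ((n:ℝ)+v+1) := by
          apply mul_le_mul (by linarith) ih (by positivity) (by linarith)

lemma cc_le {v : ℝ} (hv : 0 ≤ v) (q : ℕ) :
    cc v q ≤ (1 / Real.Gamma (v+1)) * (1 / q.factorial) := by
  unfold cc
  have hΓ : 0 < Real.Gamma (v+1) := Real.Gamma_pos_of_pos (by linarith)
  have hfac : (0:ℝ) < q.factorial := by exact_mod_cast q.factorial_pos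
  have h2 : 0 < Real.Gamma ((q:ℝ) + v + 1) := Real.Gamma_pos_of_pos (arg_pos hv q)
  rw [one_div_mul_one_div, div_le_div_iff₀ (by positivity) (by positivity)]
  have h1 : (1:ℝ) ≤ q.factorial := by exact_mod_cast q.factorial_pos
  nlinarith [gamma_ge hv q]


lemma summable_norm_cc {v : ℝ} (hv : 0 ≤ v) (t : ℝ) :
    Summable (fun q : ℕ => ‖cc v q * t ^ q‖) := by
  have hb : Summable (fun q : ℕ => (1 / Real.Gamma (v+1)) * (|t| ^ q / q.factorial)) :=
    (Real.summable_pow_div_factorial |t|).mul_left _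
  refine hb.of_nonneg_of_le (fun q => norm_nonneg _) (fun q => ?_)
  rw [norm_mul, norm_pow, Real.norm_eq_abs, Real.norm_eq_abs,
    abs_of_pos (cc_pos hv q)]
  have h1 : cc v q * |t| ^ q ≤ ((1 / Real.Gamma (v+1)) * (1 / q.factorial)) * |t| ^ q :=
    mul_le_mul_of_nonneg_right (cc_le hv q) (by positivity)
  calc cc v q * |t| ^ q ≤ ((1 / Real.Gamma (v+1)) * (1 / q.factorial)) * |t| ^ q := h1
    _ = (1 / Real.Gamma (v+1)) * (|t| ^ q / q.factorial) := by ring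

lemma summable_cc {v : ℝ} (hv : 0 ≤ v) (t : ℝ) :
    Summable (fun q : ℕ => cc v q * t ^ q) := (summable_norm_cc hv t).of_norm

lemma hh_pos {v : ℝ} (hv : 0 ≤ v) {t : ℝ} (ht : 0 ≤ t) : 0 < hh v t := by
  refine Summable.tsum_pos (summable_cc hv t) (fun q => mul_nonneg (cc_pos hv q).le (by positivity)) 0 ?_
  simpa using cc_pos hv 0

lemma cc_shift (v : ℝ) (q : ℕ) : ((q:ℝ)+1) * cc v (q+1) = cc (v+1) q := by
  unfold cc
  have h1 : ((q+1:ℕ):ℝ) + v + 1 = (q:ℝ) + (v+1) + 1 := by push_cast; ring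
  rw [h1, Nat.factorial_succ]
  have h2 : (0:ℝ) < q.factorial := by exact_mod_cast q.factorial_pos
  push_cast
  by_cases hΓ : Real.Gamma ((q:ℝ) + (v+1) + 1) = 0
  · rw [hΓ]; simp
  · field_simp

lemma cc_div {v : ℝ} (hv : 0 ≤ v) (q : ℕ) : cc (v+1) q = cc v q / ((q:ℝ)+v+1) := by
  unfold cc
  have h : (q:ℝ) + (v+1) + 1 = ((q:ℝ)+v+1) + 1 := by ring
  rw [h, Real.Gamma_add_one (arg_pos hv q).ne']
  have h2 : (0:ℝ) < q.factorial := by exact_mod_cast q.factorial_pos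
  have h3 : 0 < Real.Gamma ((q:ℝ) + v + 1) := Real.Gamma_pos_of_pos (arg_pos hv q)
  field_simp

lemma hasDerivAt_hh {v : ℝ} (hv : 0 ≤ v) (t : ℝ) :
    HasDerivAt (hh v) (hh (v+1) t) t := by
  set R : ℝ := |t| + 1 with hR
  have hRpos : 0 < R := by positivity
  have htmem : t ∈ Set.Ioo (-R) R := by
    constructor
    · have := neg_abs_le t; simp only [hR]; linarith
    · have := le_abs_self t; simp only [hR]; linarith
  set u : ℕ → ℝ := fun n => (n:ℝ) * cc v n * R^(n-1) with hu_def
  have hu : Summable u := by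
    rw [← summable_nat_add_iff 1]
    have he : (fun n : ℕ => u (n+1)) = fun n : ℕ => cc (v+1) n * R^n := by
      funext n
      simp only [hu_def]
      have : ((n+1:ℕ):ℝ) = (n:ℝ)+1 := by push_cast; ring
      rw [this, cc_shift v n]
      simp
    rw [he]
    exact summable_cc (by linarith) R
  have hbound : ∀ (n : ℕ) (y : ℝ), y ∈ Set.Ioo (-R) R →
      ‖cc v n * ((n:ℝ) * y^(n-1))‖ ≤ u n := by
    intro n y hy
    have hyR : |y| ≤ R := by
      rw [abs_le]; exact ⟨hy.1.le, hy.2.le⟩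
    rw [norm_mul, norm_mul, Real.norm_eq_abs, Real.norm_eq_abs, Real.norm_eq_abs,
      abs_of_pos (cc_pos hv n), Nat.abs_cast, abs_pow]
    simp only [hu_def]
    calc cc v n * ((n:ℝ) * |y|^(n-1)) ≤ cc v n * ((n:ℝ) * R^(n-1)) := by
          apply mul_le_mul_of_nonneg_left _ (cc_pos hv n).le
          apply mul_le_mul_of_nonneg_left _ (Nat.cast_nonneg n)
          exact pow_le_pow_left₀ (abs_nonneg y) hyR _
      _ = (n:ℝ) * cc v n * R^(n-1) := by ring
  have key := hasDerivAt_tsum_of_isPreconnected hu isOpen_Ioo (convex_Ioo (-R) R).isPreconnected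
    (g := fun (n : ℕ) (y : ℝ) => cc v n * y^n)
    (g' := fun (n : ℕ) (y : ℝ) => cc v n * ((n:ℝ) * y^(n-1)))
    (fun n y _ => (hasDerivAt_pow n y).const_mul _)
    hbound htmem (summable_cc hv t) htmem
  have hsum' : Summable (fun n : ℕ => cc v n * ((n:ℝ) * t^(n-1))) := by
    refine Summable.of_norm_bounded hu (fun n => hbound n t htmem)
  have hval : (∑' n : ℕ, cc v n * ((n:ℝ) * t^(n-1))) = hh (v+1) t := by
    rw [Summable.tsum_eq_zero_add hsum']
    simp only [Nat.cast_zero, zero_mul, mul_zero, zero_add]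
    unfold hh
    apply tsum_congr
    intro n
    have : ((n+1:ℕ):ℝ) = (n:ℝ)+1 := by push_cast; ring
    rw [this, ← cc_shift v n]
    simp only [Nat.add_sub_cancel]
    ring
  rw [← hval]
  exact key

/-- the paired term is nonpositive -/
lemma pair_nonpos {v : ℝ} (hv : 0 ≤ v) (q r : ℕ) :
    (q:ℝ) * (cc (v+1) q * cc v r - cc v q * cc (v+1) r)
      + (r:ℝ) * (cc (v+1) r * cc v q - cc v r * cc (v+1) q) ≤ 0 := by
  rw [cc_div hv q, cc_div hv r]
  have hx := arg_pos hv q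
  have hy := arg_pos hv r
  have hX := cc_pos hv q
  have hY := cc_pos hv r
  have hkey : (q:ℝ) * (cc v q / ((q:ℝ)+v+1) * cc v r - cc v q * (cc v r / ((r:ℝ)+v+1)))
      + (r:ℝ) * (cc v r / ((r:ℝ)+v+1) * cc v q - cc v r * (cc v q / ((q:ℝ)+v+1)))
      = -(cc v q * cc v r * ((q:ℝ)-(r:ℝ))^2) / (((q:ℝ)+v+1) * ((r:ℝ)+v+1)) := by
    field_simp
    ring
  rw [hkey]
  apply div_nonpos_of_nonpos_of_nonneg
  · have : 0 ≤ cc v q * cc v r * ((q:ℝ)-(r:ℝ))^2 := by positivity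
    linarith
  · positivity

noncomputable def phi (v : ℝ) (p : ℕ × ℕ) : ℝ :=
  (p.1:ℝ) * (cc (v+1) p.1 * cc v p.2 - cc v p.1 * cc (v+1) p.2)

lemma sum_phi_nonpos {v : ℝ} (hv : 0 ≤ v) (m : ℕ) :
    ∑ p ∈ antidiagonal m, phi v p ≤ 0 := by
  have hswap : ∑ p ∈ antidiagonal m, phi v p.swap = ∑ p ∈ antidiagonal m, phi v p :=
    Finset.Nat.sum_antidiagonal_swap
  have h2 : ∑ p ∈ antidiagonal m, phi v p + ∑ p ∈ antidiagonal m, phi v p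
      = ∑ p ∈ antidiagonal m, (phi v p + phi v p.swap) := by
    rw [Finset.sum_add_distrib, hswap]
  have h3 : ∑ p ∈ antidiagonal m, (phi v p + phi v p.swap) ≤ 0 := by
    apply Finset.sum_nonpos
    intro p _
    exact pair_nonpos hv p.1 p.2
  linarith

noncomputable def coefD (v : ℝ) (n : ℕ) : ℝ :=
  ∑ kl ∈ antidiagonal n, (cc (v+2) kl.1 * cc v kl.2 - cc (v+1) kl.1 * cc (v+1) kl.2)

lemma coefD_eq (v : ℝ) (n : ℕ) : coefD v n = ∑ p ∈ antidiagonal (n+1), phi v p := by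
  rw [Finset.Nat.sum_antidiagonal_succ]
  have h0 : phi v (0, n+1) = 0 := by simp [phi]
  rw [h0, zero_add]
  unfold coefD
  apply Finset.sum_congr rfl
  intro p _
  unfold phi
  simp only
  have h1 : ((p.1+1:ℕ):ℝ) = (p.1:ℝ)+1 := by push_cast; ring
  rw [h1]
  symm
  have h2 : ((p.1:ℝ)+1) * cc (v+1) (p.1+1) = cc (v+1+1) p.1 := cc_shift (v+1) p.1
  have h3 : ((p.1:ℝ)+1) * cc v (p.1+1) = cc (v+1) p.1 := cc_shift v p.1
  have h4 : v+1+1 = v+2 := by ring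
  rw [h4] at h2
  calc ((p.1:ℝ)+1) * (cc (v+1) (p.1+1) * cc v p.2 - cc v (p.1+1) * cc (v+1) p.2)
      = (((p.1:ℝ)+1) * cc (v+1) (p.1+1)) * cc v p.2
        - (((p.1:ℝ)+1) * cc v (p.1+1)) * cc (v+1) p.2 := by ring
    _ = cc (v+2) p.1 * cc v p.2 - cc (v+1) p.1 * cc (v+1) p.2 := by rw [h2, h3]

lemma coefD_nonpos {v : ℝ} (hv : 0 ≤ v) (n : ℕ) : coefD v n ≤ 0 := by
  rw [coefD_eq]; exact sum_phi_nonpos hv (n+1)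

lemma coefD_one_neg {v : ℝ} (hv : 0 ≤ v) : coefD v 1 < 0 := by
  rw [coefD_eq]
  rw [Finset.Nat.sum_antidiagonal_succ]
  rw [Finset.Nat.sum_antidiagonal_succ]
  simp only [Finset.Nat.antidiagonal_zero, Finset.sum_singleton]
  have h0 : phi v (0, 2) = 0 := by simp [phi]
  have h1 : phi v (0+1, 1) = phi v (1,1) := by norm_num
  have hphi11 : phi v (1,1) = 0 := by simp [phi]; ring
  have h2 : phi v (0+1+1, 0) = phi v (2,0) := by norm_num
  rw [h0, h1, hphi11, h2]
  simp only [zero_add, add_zero]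
  -- phi v (2,0) = 2 * (cc (v+1) 2 * cc v 0 - cc v 2 * cc (v+1) 0) < 0
  unfold phi
  simp only [Nat.cast_ofNat, Nat.cast_zero]
  have e2 := cc_div hv 2
  have e0 := cc_div hv 0
  rw [e2, e0]
  have hX := cc_pos hv 2
  have hY := cc_pos hv 0
  have hx := arg_pos hv 2
  have hy := arg_pos hv 0
  push_cast at *
  have hkey : cc v 2 / (2+v+1) * cc v 0 - cc v 2 * (cc v 0 / (0+v+1)) < 0 := by
    rw [sub_neg]
    rw [div_mul_eq_mul_div, mul_div_assoc, mul_lt_mul_iff_right₀ hX]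
    rw [div_lt_div_iff₀ (by linarith) (by linarith)]
    nlinarith
  nlinarith

lemma turan {v : ℝ} (hv : 0 ≤ v) {t : ℝ} (ht : 0 < t) :
    hh (v+2) t * hh v t - hh (v+1) t * hh (v+1) t < 0 := by
  have hv1 : (0:ℝ) ≤ v+1 := by linarith
  have hv2 : (0:ℝ) ≤ v+2 := by linarith
  have hA : hh (v+2) t * hh v t
      = ∑' n : ℕ, ∑ kl ∈ antidiagonal n, (cc (v+2) kl.1 * t^kl.1) * (cc v kl.2 * t^kl.2) :=
    tsum_mul_tsum_eq_tsum_sum_antidiagonal_of_summable_norm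
      (summable_norm_cc hv2 t) (summable_norm_cc hv t)
  have hB : hh (v+1) t * hh (v+1) t
      = ∑' n : ℕ, ∑ kl ∈ antidiagonal n, (cc (v+1) kl.1 * t^kl.1) * (cc (v+1) kl.2 * t^kl.2) :=
    tsum_mul_tsum_eq_tsum_sum_antidiagonal_of_summable_norm
      (summable_norm_cc hv1 t) (summable_norm_cc hv1 t)
  have hsA : Summable (fun n : ℕ =>
      ∑ kl ∈ antidiagonal n, (cc (v+2) kl.1 * t^kl.1) * (cc v kl.2 * t^kl.2)) :=
    (summable_norm_sum_mul_antidiagonal_of_summable_norm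
      (summable_norm_cc hv2 t) (summable_norm_cc hv t)).of_norm
  have hsB : Summable (fun n : ℕ =>
      ∑ kl ∈ antidiagonal n, (cc (v+1) kl.1 * t^kl.1) * (cc (v+1) kl.2 * t^kl.2)) :=
    (summable_norm_sum_mul_antidiagonal_of_summable_norm
      (summable_norm_cc hv1 t) (summable_norm_cc hv1 t)).of_norm
  have hAn : ∀ (w w' : ℝ) (n : ℕ),
      ∑ kl ∈ antidiagonal n, (cc w kl.1 * t^kl.1) * (cc w' kl.2 * t^kl.2)
      = (∑ kl ∈ antidiagonal n, cc w kl.1 * cc w' kl.2) * t^n := by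
    intro w w' n
    rw [Finset.sum_mul]
    apply Finset.sum_congr rfl
    intro kl hkl
    have hm := (Finset.HasAntidiagonal.mem_antidiagonal).mp hkl
    rw [← hm, pow_add]
    ring
  have hdiff : hh (v+2) t * hh v t - hh (v+1) t * hh (v+1) t
      = ∑' n : ℕ, coefD v n * t^n := by
    rw [hA, hB, ← Summable.tsum_sub hsA hsB]
    apply tsum_congr
    intro n
    rw [hAn (v+2) v n, hAn (v+1) (v+1) n]
    unfold coefD
    rw [Finset.sum_sub_distrib, sub_mul]
  rw [hdiff]
  have hsD : Summable (fun n : ℕ => coefD v n * t^n) := by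
    apply (hsA.sub hsB).congr
    intro n
    rw [hAn (v+2) v n, hAn (v+1) (v+1) n]
    unfold coefD
    rw [Finset.sum_sub_distrib, sub_mul]
  have hlt : (∑' n : ℕ, coefD v n * t^n) < ∑' _ : ℕ, (0:ℝ) := by
    apply Summable.tsum_lt_tsum (i := 1)
    · intro n
      exact mul_nonpos_of_nonpos_of_nonneg (coefD_nonpos hv n) (by positivity)
    · have := coefD_one_neg hv
      have : coefD v 1 * t^1 < 0 := mul_neg_of_neg_of_pos this (by positivity)
      simpa using this
    · exact hsD
    · exact summable_zero
  simpa using hlt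

lemma besselI_eq (v : ℝ) {κ : ℝ} (hκ : 0 < κ) :
    besselI v κ = (κ/2) ^ v * hh v (κ^2/4) := by
  unfold besselI hh
  rw [← tsum_mul_left]
  apply tsum_congr
  intro q
  have h2 : (0:ℝ) < κ/2 := by linarith
  have hcast : (2 * (q:ℝ) + v) = v + ((2*q : ℕ) : ℝ) := by push_cast; ring
  rw [hcast, Real.rpow_add h2, Real.rpow_natCast, pow_mul]
  have : (κ/2)^2 = κ^2/4 := by ring
  rw [this]
  unfold cc
  ring

lemma Ap_eq {p : ℕ} (hp : 2 ≤ p) {κ : ℝ} (hκ : 0 < κ) :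
    Ap p κ = (κ/2) * (hh ((p:ℝ)/2 - 1 + 1) (κ^2/4) / hh ((p:ℝ)/2 - 1) (κ^2/4)) := by
  set v : ℝ := (p:ℝ)/2 - 1 with hv_def
  have h2 : (0:ℝ) < κ/2 := by linarith
  have hpv : ((p:ℕ):ℝ)/2 = v + 1 := by simp [hv_def]
  have hv0 : (0:ℝ) ≤ v := by
    have : (2:ℝ) ≤ (p:ℝ) := by exact_mod_cast hp
    simp only [hv_def]; linarith
  have ht0 : (0:ℝ) ≤ κ^2/4 := by positivity
  have hWne : hh v (κ^2/4) ≠ 0 := (hh_pos hv0 ht0).ne'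
  have hne : (κ/2) ^ v ≠ 0 := (Real.rpow_pos_of_pos h2 v).ne'
  unfold Ap
  rw [show ((p:ℝ)/2) = v + 1 from hpv, show v + 1 - 1 = v by ring]
  rw [besselI_eq _ hκ, besselI_eq _ hκ, Real.rpow_add h2, Real.rpow_one]
  field_simp

end Stmt9Aux

open Stmt9Aux in
theorem stmt_9 (p : ℕ) (hp : 2 ≤ p) (κ : ℝ) (hκ : 0 < κ) :
    κ * deriv (Ap p) κ < Ap p κ := by
  set v : ℝ := (p:ℝ)/2 - 1 with hv_def
  have hv0 : (0:ℝ) ≤ v := by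
    have : (2:ℝ) ≤ (p:ℝ) := by exact_mod_cast hp
    simp only [hv_def]; linarith
  have hv1 : (0:ℝ) ≤ v + 1 := by linarith
  set t₀ : ℝ := κ^2/4 with ht_def
  have ht₀ : 0 < t₀ := by positivity
  set U : ℝ := hh (v+1) t₀ with hU_def
  set W : ℝ := hh v t₀ with hW_def
  set E : ℝ := hh (v+2) t₀ with hE_def
  have hW : 0 < W := hh_pos hv0 ht₀.le
  have hU : 0 < U := hh_pos hv1 ht₀.le
  -- G is the nice local form of Ap p
  set G : ℝ → ℝ := fun x => (x/2) * (hh (v+1) (x^2/4) / hh v (x^2/4)) with hG_def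
  have hEV : Ap p =ᶠ[nhds κ] G := by
    filter_upwards [Ioi_mem_nhds hκ] with x hx
    have := Ap_eq hp (Set.mem_Ioi.mp hx)
    simpa [hG_def, hv_def] using this
  -- derivative of the inner x ↦ x^2/4
  have hinner : HasDerivAt (fun x : ℝ => x^2/4) (κ/2) κ := by
    have h := (hasDerivAt_pow 2 κ).div_const 4
    refine h.congr_deriv ?_
    push_cast
    ring
  have hdW : HasDerivAt (fun x : ℝ => hh v (x^2/4)) (U * (κ/2)) κ := by
    have := (hasDerivAt_hh hv0 t₀).comp κ hinner
    simpa [Function.comp_def, ht_def, hU_def, hW_def, hE_def] using this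
  have hdU : HasDerivAt (fun x : ℝ => hh (v+1) (x^2/4)) (E * (κ/2)) κ := by
    have := (hasDerivAt_hh hv1 t₀).comp κ hinner
    have h21 : v + 1 + 1 = v + 2 := by ring
    rw [h21] at this
    simpa [Function.comp_def, ht_def, hU_def, hW_def, hE_def] using this
  have hdQ : HasDerivAt (fun x : ℝ => hh (v+1) (x^2/4) / hh v (x^2/4))
      ((E * (κ/2) * W - U * (U * (κ/2))) / W^2) κ := by
    have := hdU.div hdW hW.ne'
    simpa [ht_def, hU_def, hW_def, hE_def, Pi.div_def] using this
  have hdhalf : HasDerivAt (fun x : ℝ => x/2) (1/2 : ℝ) κ := by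
    simpa using (hasDerivAt_id κ).div_const 2
  have hdG : HasDerivAt G
      ((1/2) * (U / W) + (κ/2) * ((E * (κ/2) * W - U * (U * (κ/2))) / W^2)) κ := by
    have := hdhalf.mul hdQ
    simpa [hG_def, ht_def, hU_def, hW_def, hE_def, Pi.mul_def] using this
  have hderiv : deriv (Ap p) κ
      = (1/2) * (U / W) + (κ/2) * ((E * (κ/2) * W - U * (U * (κ/2))) / W^2) := by
    rw [hEV.deriv_eq, hdG.deriv]
  have hApκ : Ap p κ = (κ/2) * (U / W) := by
    have := Ap_eq hp hκ
    simpa [hU_def, hW_def, ht_def, hv_def] using this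
  rw [hderiv, hApκ]
  have hN : E * W - U * U < 0 := turan hv0 ht₀
  have hkey : κ * ((1/2) * (U / W) + (κ/2) * ((E * (κ/2) * W - U * (U * (κ/2))) / W^2))
      - (κ/2) * (U / W) = (κ^3/4) * ((E * W - U * U) / W^2) := by
    field_simp
    ring
  nlinarith [mul_neg_of_pos_of_neg (show (0:ℝ) < κ^3/4 by positivity)
    (div_neg_of_neg_of_pos hN (by positivity : (0:ℝ) < W^2)), hkey]
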